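/- The Kronecker product is compatible with both PRO compositions: (A ↔ B) ⊙ (A' ↔ B') = (A ⊙ A') ↔ (B ⊙ B') and (A ↕ B) ⊙ (A' ↕ B') = (A ⊙ A') ↕ (B ⊙ B'), whenever the compositions are defined. Consequently the map A ⊗ B ↦ A ⊙ B induces an isomorphism of 𝕂-ModPros 𝕂(M) ⊗ 𝕂(N) ≅ 𝕂(MN). -/

import Mathlib

open BigOperators

/-- Hypermatrices: families of scalars indexed by an `m`-tuple and an `n`-tuple
of indices in `[N]`, i.e. `N^m × N^n` matrices. -/
abbrev HM (K : Type) (N m n : ℕ) := (Fin m → Fin N) → (Fin n → Fin N) → K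

/-- Horizontal composition of hypermatrices (Kronecker product of rectangular
matrices). -/
def hcomp {K : Type} [Mul K] {N m n m' n' : ℕ} (A : HM K N m n) (B : HM K N m' n') :
    HM K N (m + m') (n + n') :=
  fun I J =>
    A (fun i => I (Fin.castAdd m' i)) (fun j => J (Fin.castAdd n' j)) *
    B (fun i => I (Fin.natAdd m i)) (fun j => J (Fin.natAdd n j))

/-- Vertical composition of hypermatrices (matrix product). -/
def vcomp {K : Type} [NonUnitalNonAssocSemiring K] {N m n p : ℕ}
    (A : HM K N m n) (B : HM K N n p) : HM K N m p :=
  fun I J => ∑ L : Fin n → Fin N, A I L * B L J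

/-- The identity hypermatrix `Id_n = I(N)^{↔ n}`. -/
def idHM (K : Type) [Zero K] [One K] (N n : ℕ) : HM K N n n :=
  fun I J => if I = J then 1 else 0

/-- The elementary hypermatrix `E(N,p,q;I₀,J₀)` with entry 1 at `(I₀,J₀)` and 0
elsewhere. -/
def EHM (K : Type) [Zero K] [One K] (N p q : ℕ)
    (I0 : Fin p → Fin N) (J0 : Fin q → Fin N) : HM K N p q :=
  fun I J => if I = I0 ∧ J = J0 then 1 else 0

/-- The first component (`i % M`) of the index decomposition `i = q·M + r`. -/
def fmod (M N : ℕ) [NeZero M] (i : Fin (M * N)) : Fin M :=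
  ⟨i.val % M, Nat.mod_lt _ (Nat.pos_of_ne_zero (NeZero.ne M))⟩

/-- The second component (`i / M`) of the index decomposition `i = q·M + r`. -/
def fdiv (M N : ℕ) [NeZero M] (i : Fin (M * N)) : Fin N :=
  ⟨i.val / M, by
    have hM : 0 < M := Nat.pos_of_ne_zero (NeZero.ne M)
    exact (Nat.div_lt_iff_lt_mul hM).mpr (lt_of_lt_of_eq i.isLt (Nat.mul_comm M N))⟩

/-- Kronecker product of hypermatrices:
`(A ⊙ B)^I_J = A^{I%M}_{J%M} · B^{I/M}_{J/M}`. -/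
def kron {K : Type} [Mul K] {M N p q : ℕ} [NeZero M]
    (A : HM K M p q) (B : HM K N p q) : HM K (M * N) p q :=
  fun I J =>
    A (fun t => fmod M N (I t)) (fun t => fmod M N (J t)) *
    B (fun t => fdiv M N (I t)) (fun t => fdiv M N (J t))

def mnEquiv (M N : ℕ) [NeZero M] : Fin (M * N) ≃ Fin M × Fin N where
  toFun i := (fmod M N i, fdiv M N i)
  invFun x := ⟨x.1.val + M * x.2.val, by
    have h1 : (x.1.val : ℕ) + M * x.2.val < M * (x.2.val + 1) := by
      rw [Nat.mul_succ, Nat.add_comm]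
      exact Nat.add_lt_add_left x.1.isLt _
    exact lt_of_lt_of_le h1 (Nat.mul_le_mul_left M x.2.isLt)⟩
  left_inv i := by
    ext
    simp [fmod, fdiv, Nat.mod_add_div]
  right_inv x := by
    have hM : 0 < M := Nat.pos_of_ne_zero (NeZero.ne M)
    ext
    · simp [fmod, Nat.add_mul_mod_self_left, Nat.mod_eq_of_lt x.1.isLt]
    · simp [fdiv, Nat.add_mul_div_left _ _ hM, Nat.div_eq_of_lt x.1.isLt]

lemma fmod_symm {M N : ℕ} [NeZero M] (x : Fin M × Fin N) :
    fmod M N ((mnEquiv M N).symm x) = x.1 :=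
  congrArg Prod.fst ((mnEquiv M N).apply_symm_apply x)

lemma fdiv_symm {M N : ℕ} [NeZero M] (x : Fin M × Fin N) :
    fdiv M N ((mnEquiv M N).symm x) = x.2 :=
  congrArg Prod.snd ((mnEquiv M N).apply_symm_apply x)

lemma eq_symm_fun_iff {M N p : ℕ} [NeZero M] (I : Fin p → Fin (M * N))
    (a : Fin p → Fin M) (b : Fin p → Fin N) :
    (I = fun t => (mnEquiv M N).symm (a t, b t)) ↔
      ((fun t => fmod M N (I t)) = a ∧ (fun t => fdiv M N (I t)) = b) := by
  constructor
  · rintro rfl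
    exact ⟨funext fun t => fmod_symm _, funext fun t => fdiv_symm _⟩
  · rintro ⟨ha, hb⟩
    funext t
    rw [Equiv.eq_symm_apply]
    have ha' := congrFun ha t
    have hb' := congrFun hb t
    simp only [mnEquiv, Equiv.coe_fn_mk]
    exact Prod.ext ha' hb'

noncomputable section

open TensorProduct

variable {K : Type} [CommSemiring K] (M N : ℕ) [NeZero M]

/-- kron as a bilinear map. -/
def kronBilin (p q : ℕ) : HM K M p q →ₗ[K] HM K N p q →ₗ[K] HM K (M * N) p q :=
  LinearMap.mk₂ K kron
    (fun A A' B => by funext I J; simp [kron, add_mul])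
    (fun c A B => by funext I J; simp [kron]; ring)
    (fun A B B' => by funext I J; simp [kron, mul_add])
    (fun c A B => by funext I J; simp [kron]; ring)

/-- Standard basis of HM. -/
def hmBasis (K : Type) [CommSemiring K] (N p q : ℕ) :
    Module.Basis ((Fin p → Fin N) × (Fin q → Fin N)) K (HM K N p q) :=
  (Pi.basisFun K ((Fin p → Fin N) × (Fin q → Fin N))).map
    (LinearEquiv.curry K K (Fin p → Fin N) (Fin q → Fin N))

lemma hmBasis_apply (K : Type) [CommSemiring K] (N p q : ℕ)
    (x : (Fin p → Fin N) × (Fin q → Fin N)) :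
    hmBasis K N p q x = EHM K N p q x.1 x.2 := by
  funext I J
  simp only [hmBasis, Module.Basis.map_apply, Pi.basisFun_apply, LinearEquiv.coe_curry,
    Function.curry, EHM]
  rw [Pi.single_apply]
  simp [Prod.ext_iff, and_comm]

lemma kron_EHM (p q : ℕ) (x : (Fin p → Fin M) × (Fin q → Fin M))
    (y : (Fin p → Fin N) × (Fin q → Fin N)) :
    kron (K := K) (EHM K M p q x.1 x.2) (EHM K N p q y.1 y.2) =
      EHM K (M * N) p q (fun t => (mnEquiv M N).symm (x.1 t, y.1 t))
        (fun t => (mnEquiv M N).symm (x.2 t, y.2 t)) := by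
  funext I J
  simp only [kron, EHM, ite_mul, one_mul, zero_mul, mul_ite, mul_one, mul_zero]
  simp only [eq_symm_fun_iff]
  by_cases h1 : (fun t => fmod M N (I t)) = x.1 <;>
  by_cases h2 : (fun t => fdiv M N (I t)) = y.1 <;>
  by_cases h3 : (fun t => fmod M N (J t)) = x.2 <;>
  by_cases h4 : (fun t => fdiv M N (J t)) = y.2 <;>
  simp [h1, h2, h3, h4]

/-- Index equivalence for the bases. -/
def idxEquiv (p q : ℕ) :
    (((Fin p → Fin M) × (Fin q → Fin M)) × ((Fin p → Fin N) × (Fin q → Fin N))) ≃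
      ((Fin p → Fin (M * N)) × (Fin q → Fin (M * N))) where
  toFun z := (fun t => (mnEquiv M N).symm (z.1.1 t, z.2.1 t),
              fun t => (mnEquiv M N).symm (z.1.2 t, z.2.2 t))
  invFun w := ((fun t => fmod M N (w.1 t), fun t => fmod M N (w.2 t)),
               (fun t => fdiv M N (w.1 t), fun t => fdiv M N (w.2 t)))
  left_inv z := by
    simp [fmod_symm, fdiv_symm]
  right_inv w := by
    have h : ∀ i : Fin (M * N), (mnEquiv M N).symm (fmod M N i, fdiv M N i) = i :=
      fun i => (mnEquiv M N).symm_apply_apply i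
    exact Prod.ext (funext fun t => h _) (funext fun t => h _)

def kronEquiv (p q : ℕ) :
    TensorProduct K (HM K M p q) (HM K N p q) ≃ₗ[K] HM K (M * N) p q :=
  ((hmBasis K M p q).tensorProduct (hmBasis K N p q)).equiv (hmBasis K (M * N) p q)
    (idxEquiv M N p q)

lemma kronEquiv_tmul (p q : ℕ) (A : HM K M p q) (B : HM K N p q) :
    kronEquiv M N p q (A ⊗ₜ[K] B) = kron A B := by
  have hL : (kronEquiv (K := K) M N p q).toLinearMap =
      TensorProduct.lift (kronBilin M N p q) := by
    apply ((hmBasis K M p q).tensorProduct (hmBasis K N p q)).ext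
    rintro ⟨x, y⟩
    have e1 : kronEquiv (K := K) M N p q
        (((hmBasis K M p q).tensorProduct (hmBasis K N p q)) (x, y)) =
        hmBasis K (M * N) p q (idxEquiv M N p q (x, y)) := Module.Basis.equiv_apply _ (x, y) _ _
    have e2 : ((hmBasis K M p q).tensorProduct (hmBasis K N p q)) (x, y) =
        hmBasis K M p q x ⊗ₜ[K] hmBasis K N p q y := Module.Basis.tensorProduct_apply' _ _ _
    rw [LinearEquiv.coe_coe, e1, e2, TensorProduct.lift.tmul]
    simp only [kronBilin, LinearMap.mk₂_apply, hmBasis_apply]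
    rw [kron_EHM]
    rfl
  calc kronEquiv M N p q (A ⊗ₜ[K] B)
      = (kronEquiv (K := K) M N p q).toLinearMap (A ⊗ₜ[K] B) := rfl
    _ = TensorProduct.lift (kronBilin M N p q) (A ⊗ₜ[K] B) := by rw [hL]
    _ = kron A B := rfl

end

def funEquiv (M N : ℕ) [NeZero M] (n : ℕ) :
    (Fin n → Fin (M * N)) ≃ ((Fin n → Fin M) × (Fin n → Fin N)) where
  toFun L := (fun t => fmod M N (L t), fun t => fdiv M N (L t))
  invFun x t := (mnEquiv M N).symm (x.1 t, x.2 t)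
  left_inv L := funext fun t => (mnEquiv M N).symm_apply_apply _
  right_inv x := Prod.ext (funext fun t => fmod_symm _) (funext fun t => fdiv_symm _)

open TensorProduct in
/-- The Kronecker product is compatible with both PRO compositions, and consequently
`A ⊗ B ↦ A ⊙ B` induces an isomorphism of `𝕂`-ModPros `𝕂(M) ⊗ 𝕂(N) ≅ 𝕂(MN)`. -/
theorem kron_modpro_iso {K : Type} [CommSemiring K] (M N : ℕ) [NeZero M] :
    (∀ (m n m' n' : ℕ) (A : HM K M m n) (B : HM K M m' n')
        (A' : HM K N m n) (B' : HM K N m' n'),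
        kron (hcomp A B) (hcomp A' B') = hcomp (kron A A') (kron B B')) ∧
    (∀ (m n p : ℕ) (A : HM K M m n) (B : HM K M n p)
        (A' : HM K N m n) (B' : HM K N n p),
        kron (vcomp A B) (vcomp A' B') = vcomp (kron A A') (kron B B')) ∧
    (∀ p q : ℕ, ∃ φ : TensorProduct K (HM K M p q) (HM K N p q) ≃ₗ[K] HM K (M * N) p q,
        ∀ (A : HM K M p q) (B : HM K N p q), φ (A ⊗ₜ[K] B) = kron A B) := by
  refine ⟨?_, ?_, ?_⟩
  · intro m n m' n' A B A' B'
    funext I J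
    simp only [kron, hcomp]
    ring
  · intro m n p A B A' B'
    funext I J
    simp only [kron, vcomp]
    rw [Finset.sum_mul_sum]
    rw [← Equiv.sum_comp (funEquiv M N n).symm
      (fun L => (A (fun t => fmod M N (I t)) (fun t => fmod M N (L t)) *
          A' (fun t => fdiv M N (I t)) (fun t => fdiv M N (L t))) *
        (B (fun t => fmod M N (L t)) (fun t => fmod M N (J t)) *
          B' (fun t => fdiv M N (L t)) (fun t => fdiv M N (J t))))]
    simp only [funEquiv, Equiv.coe_fn_symm_mk, fmod_symm, fdiv_symm]
    rw [Fintype.sum_prod_type]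
    refine Finset.sum_congr rfl fun L1 _ => Finset.sum_congr rfl fun L2 _ => by ring
  · intro p q
    exact ⟨kronEquiv M N p q, fun A B => kronEquiv_tmul M N p q A B⟩
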